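/- For every m ≥ 1 and all positive definite hermitian complex m × m matrices M and N, one has Tr(M·N) ≥ m · (det M)^(1/m) · (det N)^(1/m). -/

import Mathlib

noncomputable section
open Matrix Complex
open scoped ComplexOrder

/-- For every `m ≥ 1` and all positive definite hermitian complex `m × m` matrices
`M` and `N`, one has `Tr(M·N) ≥ m · (det M)^(1/m) · (det N)^(1/m)`.
(The determinants of hermitian positive definite matrices are positive reals;
their real `m`-th roots appear on the left, and `≤` is the order on `ℂ`.) -/
theorem stmt_1 :
    ∀ m : ℕ, 1 ≤ m → ∀ M N : Matrix (Fin m) (Fin m) ℂ,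
      M.IsHermitian → N.IsHermitian → M.PosDef → N.PosDef →
      ((m : ℝ) * M.det.re ^ ((m : ℝ)⁻¹) * N.det.re ^ ((m : ℝ)⁻¹) : ℝ) ≤
        ((M * N).trace : ℂ) := by
  intro m hm M N hMh hNh hM hN
  have hmR : (0 : ℝ) < (m : ℝ) := by exact_mod_cast hm
  have hP := hM.posSemidef
  set P := (open scoped MatrixOrder in CFC.sqrt M) with hPdef
  have hPsd : P.PosSemidef := open scoped MatrixOrder in (CFC.sqrt_nonneg M).posSemidef
  have hPH : P.IsHermitian := hPsd.1
  have hPP : P * P = M := open scoped MatrixOrder in CFC.sqrt_mul_sqrt_self M hP.nonneg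
  have hA_psd : (P * N * P).PosSemidef := by
    have := hN.posSemidef.mul_mul_conjTranspose_same P
    rwa [hPH.eq] at this
  set A := P * N * P with hAdef
  have hAh : A.IsHermitian := hA_psd.1
  set μ : Fin m → ℝ := hAh.eigenvalues with hμ
  have hμ0 : ∀ i, 0 ≤ μ i := fun i => hA_psd.eigenvalues_nonneg i
  -- trace identity
  have htr : (M * N).trace = A.trace := by
    rw [hAdef, ← hPP, mul_assoc, trace_mul_comm, mul_assoc]
  -- trace = sum of eigenvalues
  have hAtr : A.trace = ((∑ i, μ i : ℝ) : ℂ) := by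
    nth_rewrite 1 [hAh.spectral_theorem]
    rw [Unitary.conjStarAlgAut_apply, trace_mul_cycle, Matrix.mem_unitaryGroup_iff'.mp hAh.eigenvectorUnitary.2, one_mul,
      trace_diagonal]
    push_cast
    rfl
  -- determinants
  have hdM : M.det = ((M.det.re : ℝ) : ℂ) := by
    have := hM.det_pos
    rw [Complex.lt_def] at this
    exact Complex.ext rfl (by simpa using this.2.symm)
  have hdN : N.det = ((N.det.re : ℝ) : ℂ) := by
    have := hN.det_pos
    rw [Complex.lt_def] at this
    exact Complex.ext rfl (by simpa using this.2.symm)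
  have hdetA : A.det = M.det * N.det := by
    rw [hAdef, det_mul, det_mul, ← hPP, det_mul]; ring
  have hprod : (∏ i, μ i) = M.det.re * N.det.re := by
    have h1 : A.det = ((∏ i, μ i : ℝ) : ℂ) := by
      rw [hAh.det_eq_prod_eigenvalues]; push_cast; rfl
    have h2 : A.det = (((M.det.re * N.det.re : ℝ)) : ℂ) := by
      rw [hdetA, hdM, hdN, ← Complex.ofReal_mul]; simp
    exact_mod_cast h1.symm.trans h2
  -- reduce to real inequality
  rw [htr, hAtr, Complex.real_le_real]
  -- AM-GM
  have hAMGM := Real.geom_mean_le_arith_mean_weighted Finset.univ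
    (fun _ => (m : ℝ)⁻¹) μ (fun i _ => by positivity)
    (by simp [Finset.card_univ, mul_inv_cancel₀ hmR.ne']) (fun i _ => hμ0 i)
  have hgeo : (∏ i, μ i ^ ((m : ℝ)⁻¹)) = (∏ i, μ i) ^ ((m : ℝ)⁻¹) :=
    Real.finset_prod_rpow Finset.univ μ (fun i _ => hμ0 i) _
  rw [hgeo, hprod, Real.mul_rpow hM.det_pos.1.le hN.det_pos.1.le] at hAMGM
  calc (m : ℝ) * M.det.re ^ ((m : ℝ)⁻¹) * N.det.re ^ ((m : ℝ)⁻¹)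
      = (m : ℝ) * (M.det.re ^ ((m : ℝ)⁻¹) * N.det.re ^ ((m : ℝ)⁻¹)) := by ring
    _ ≤ (m : ℝ) * ∑ i, (m : ℝ)⁻¹ * μ i := by
        exact mul_le_mul_of_nonneg_left hAMGM hmR.le
    _ = ∑ i, μ i := by
        rw [← Finset.mul_sum, ← mul_assoc, mul_inv_cancel₀ hmR.ne', one_mul]
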